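/- Let G be a finite simple bipartite Δ-regular graph whose girth (length of its shortest cycle) is g, with g ≥ 4 finite, and let C(G) be a graph code of G over a finite field 𝔽_q (defined by nonzero coefficients a(v,e) at each vertex-incident-edge pair). Then C(G) has ((g−1)(Δ−1), g−1)-cooperative locality: for every set S of g−1 edges there exists a set Γ of at most (g−1)(Δ−1) edges, disjoint from S, such that any two codewords of C(G) agreeing on all edges in Γ agree on all edges in S. -/

import Mathlib

open Finset

/-- In a graph of girth `g`, any set of fewer than `g` edges spans a forest, hence
has a "leaf": an edge `e` with an endpoint `v` incident to no other edge of the set. -/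
lemma stmt7_exists_leaf {V : Type*} [Fintype V] [DecidableEq V]
    (G : SimpleGraph V) {g : ℕ} (hg4 : 4 ≤ g) (hgirth : G.girth = g)
    (S : Finset (Sym2 V)) (hSE : ∀ e ∈ S, e ∈ G.edgeSet)
    (hcard : S.card < g) (hne : S.Nonempty) :
    ∃ e ∈ S, ∃ v, v ∈ e ∧ ∀ f ∈ S, v ∈ f → f = e := by
  classical
  by_contra hno
  push_neg at hno
  -- hno : ∀ e ∈ S, ∀ v ∈ e, ∃ f ∈ S, v ∈ f ∧ f ≠ e
  set H : SimpleGraph V := SimpleGraph.fromEdgeSet (↑S) with hH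
  have hle : H ≤ G := by
    intro p q hpq
    rw [hH, SimpleGraph.fromEdgeSet_adj] at hpq
    exact (G.mem_edgeSet).mp (hSE _ hpq.1)
  have hedges : ∀ {p q : V} (w : H.Walk p q), ∀ e ∈ w.edges, e ∈ S := by
    intro p q w e he
    have := w.edges_subset_edgeSet he
    rw [hH, SimpleGraph.edgeSet_fromEdgeSet] at this
    exact this.1
  -- the key fact: `g ≤` the length of any cycle of `G`
  have hegirth : G.egirth = (g : ℕ∞) := by
    have h2 : G.egirth.toNat = g := hgirth
    have hne' : G.egirth ≠ ⊤ := by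
      intro h
      rw [h] at h2
      simp at h2
      omega
    rw [← h2, ENat.coe_toNat hne']
  have hcyclen : ∀ (x : V) (c : G.Walk x x), c.IsCycle → g ≤ c.length := by
    intro x c hc
    have := (SimpleGraph.le_egirth.mp le_rfl) x c hc
    rw [hegirth] at this
    exact_mod_cast this
  -- get a starting edge of H
  obtain ⟨e₀, he₀⟩ := hne
  have he₀E := hSE _ he₀
  obtain ⟨w₀, he₀eq⟩ := Sym2.mem_iff_exists.mp (Sym2.out_fst_mem e₀)
  set v₀ := e₀.out.1
  have hne₀ : v₀ ≠ w₀ := by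
    intro h
    exact G.not_isDiag_of_mem_edgeSet he₀E (by rw [he₀eq, h]; exact Sym2.mk_isDiag_iff.mpr rfl)
  have hadj₀ : H.Adj v₀ w₀ := by
    rw [hH, SimpleGraph.fromEdgeSet_adj]
    exact ⟨by rw [← he₀eq]; exact_mod_cast he₀, hne₀⟩
  have hP1 : ∃ (u v : V) (p : H.Walk u v), p.IsPath ∧ p.length = 1 :=
    ⟨v₀, w₀, SimpleGraph.Walk.cons hadj₀ SimpleGraph.Walk.nil, by simp [hne₀], by simp⟩
  set P : ℕ → Prop := fun n => ∃ (u v : V) (p : H.Walk u v), p.IsPath ∧ p.length = n with hPdef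
  have hcardV : 1 ≤ Fintype.card V := Fintype.card_pos_iff.mpr ⟨v₀⟩
  have hboundP : ∀ m, P m → m ≤ Fintype.card V := by
    rintro m ⟨u, v, p, hp, rfl⟩
    exact hp.length_lt.le
  set N := Nat.findGreatest P (Fintype.card V) with hNdef
  have hPN : P N := Nat.findGreatest_spec hcardV hP1
  have hmax : ∀ m, P m → m ≤ N := fun m hm => Nat.le_findGreatest (hboundP m hm) hm
  have hN1 : 1 ≤ N := Nat.le_findGreatest hcardV hP1
  obtain ⟨u, v, p, hp, hlen⟩ := hPN
  cases p with
  | nil => simp at hlen; omega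
  | @cons _ c _ h q =>
    -- first edge of the path is s(u, c); apply the no-leaf hypothesis at u
    have heS : s(u, c) ∈ S := by
      have := h
      rw [hH, SimpleGraph.fromEdgeSet_adj] at this
      exact_mod_cast this.1
    obtain ⟨f, hfS, hufmem, hfne⟩ := hno _ heS u (Sym2.mem_mk_left u c)
    obtain ⟨x, rfl⟩ := Sym2.mem_iff_exists.mp hufmem
    have hux : u ≠ x := by
      intro hh
      exact G.not_isDiag_of_mem_edgeSet (hSE _ hfS) (by rw [hh]; exact Sym2.mk_isDiag_iff.mpr rfl)
    have hadjux : H.Adj u x := by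
      rw [hH, SimpleGraph.fromEdgeSet_adj]
      exact ⟨by exact_mod_cast hfS, hux⟩
    rw [SimpleGraph.Walk.cons_isPath_iff] at hp
    -- the edge s(u,x) is not an edge of the path
    have hfe : s(u, x) ∉ (SimpleGraph.Walk.cons h q).edges := by
      intro hmem
      rw [SimpleGraph.Walk.edges_cons] at hmem
      rcases List.mem_cons.mp hmem with h1 | h2
      · exact hfne h1
      · exact hp.2 (q.fst_mem_support_of_mem_edges h2)
    by_cases hx : x ∈ (SimpleGraph.Walk.cons h q).support
    · -- close up a cycle, contradiction with girth
      set q' := (SimpleGraph.Walk.cons h q).takeUntil x hx with hq'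
      have hq'path : q'.IsPath :=
        SimpleGraph.Walk.IsPath.takeUntil (by rw [SimpleGraph.Walk.cons_isPath_iff]; exact hp) hx
      have hq'edges : s(x, u) ∉ q'.edges := by
        rw [Sym2.eq_swap]
        intro hh
        exact hfe ((SimpleGraph.Walk.edges_takeUntil_subset _ hx) hh)
      have hcyc : (SimpleGraph.Walk.cons hadjux.symm q').IsCycle :=
        SimpleGraph.Path.cons_isCycle ⟨q', hq'path⟩ hadjux.symm hq'edges
      set cyc := SimpleGraph.Walk.cons hadjux.symm q' with hcycdef
      have hcycG : (cyc.mapLe hle).IsCycle := hcyc.mapLe hle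
      have hlb : g ≤ (cyc.mapLe hle).length := hcyclen _ _ hcycG
      have hlenmap : (cyc.mapLe hle).length = cyc.length := by
        simp [SimpleGraph.Walk.mapLe, SimpleGraph.Walk.length_map]
      -- cycle length ≤ S.card
      have hub : cyc.length ≤ S.card := by
        have hnodup : cyc.edges.Nodup := hcyc.isCircuit.isTrail.edges_nodup
        have hsub : cyc.edges.toFinset ⊆ S := by
          intro e he
          exact hedges cyc e (List.mem_toFinset.mp he)
        calc cyc.length = cyc.edges.length := (SimpleGraph.Walk.length_edges _).symm
          _ = cyc.edges.toFinset.card := (List.toFinset_card_of_nodup hnodup).symm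
          _ ≤ S.card := Finset.card_le_card hsub
      omega
    · -- extend the path, contradiction with maximality
      have hext : P (N + 1) := by
        refine ⟨x, v, SimpleGraph.Walk.cons hadjux.symm (SimpleGraph.Walk.cons h q), ?_, ?_⟩
        · rw [SimpleGraph.Walk.cons_isPath_iff]
          exact ⟨by rw [SimpleGraph.Walk.cons_isPath_iff]; exact hp, hx⟩
        · simpa using hlen
      have := hmax _ hext
      omega

/-- The inductive decoding step: any set of fewer than `g` edges can be decoded
from at most `|S| * (Δ - 1)` other edges. -/
lemma stmt7_aux {V : Type*} [Fintype V] [DecidableEq V]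
    (G : SimpleGraph V) [DecidableRel G.Adj]
    {Δ g : ℕ} (hg4 : 4 ≤ g) (hgirth : G.girth = g)
    (hreg : G.IsRegularOfDegree Δ)
    {F : Type*} [Field F]
    (a : V → Sym2 V → F) (ha : ∀ v : V, ∀ e ∈ G.incidenceSet v, a v e ≠ 0) :
    ∀ (n : ℕ) (S : Finset G.edgeFinset), S.card = n → n < g →
      ∃ Γ : Finset G.edgeFinset, Disjoint Γ S ∧ Γ.card ≤ n * (Δ - 1) ∧
        ∀ z : G.edgeFinset → F,
          (∀ v : V, ∑ e : G.edgeFinset,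
            (if v ∈ (e : Sym2 V) then a v (e : Sym2 V) * z e else 0) = 0) →
          (∀ e ∈ Γ, z e = 0) → ∀ e ∈ S, z e = 0 := by
  classical
  intro n
  induction n with
  | zero =>
    intro S hS _
    refine ⟨∅, by simp, by simp, fun z _ _ e he => absurd he ?_⟩
    simp [Finset.card_eq_zero.mp hS]
  | succ n ih =>
    intro S hS hlt
    have hne : S.Nonempty := Finset.card_pos.mp (by omega)
    set S' : Finset (Sym2 V) := S.image (fun e => e.val) with hS'
    have hinj : Function.Injective (fun e : G.edgeFinset => e.val) :=
      Subtype.val_injective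
    have hS'card : S'.card = n + 1 := by
      rw [hS', Finset.card_image_of_injective _ hinj, hS]
    have hS'E : ∀ e ∈ S', e ∈ G.edgeSet := by
      intro e he
      obtain ⟨f, _, rfl⟩ := Finset.mem_image.mp he
      exact (SimpleGraph.mem_edgeFinset).mp f.2
    obtain ⟨e₀, he₀S', v, hv, hleaf⟩ := stmt7_exists_leaf G hg4 hgirth S' hS'E
      (by omega) (Finset.card_pos.mp (by omega))
    obtain ⟨eh, hehS, hehe⟩ := Finset.mem_image.mp he₀S'
    -- `v ∈ ↑eh` and the leaf property in terms of the subtype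
    have hveh : v ∈ (eh : Sym2 V) := by rw [hehe]; exact hv
    have hleaf' : ∀ f ∈ S, v ∈ (f : Sym2 V) → f = eh := by
      intro f hf hvf
      have : (f : Sym2 V) = e₀ := hleaf _ (Finset.mem_image_of_mem _ hf) hvf
      exact Subtype.ext (by rw [this, ← hehe])
    set T := S.erase eh with hT
    have hTcard : T.card = n := by rw [hT, Finset.card_erase_of_mem hehS, hS]; omega
    obtain ⟨Γ₀, hΓ₀T, hΓ₀card, hΓ₀dec⟩ := ih T hTcard (by omega)
    -- edges at v other than eh
    set Nv : Finset G.edgeFinset :=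
      Finset.univ.filter (fun f : G.edgeFinset => v ∈ (f : Sym2 V) ∧ f ≠ eh) with hNv
    have hNvmem : ∀ f : G.edgeFinset, f ∈ Nv ↔ v ∈ (f : Sym2 V) ∧ f ≠ eh := by
      intro f; rw [hNv]; simp
    have hNvS : ∀ f ∈ Nv, f ∉ S := by
      intro f hf hfS
      obtain ⟨h1, h2⟩ := (hNvmem f).mp hf
      exact h2 (hleaf' f hfS h1)
    -- |Nv| ≤ Δ - 1
    have hNvcard : Nv.card ≤ Δ - 1 := by
      set Mv : Finset G.edgeFinset :=
        Finset.univ.filter (fun f : G.edgeFinset => v ∈ (f : Sym2 V)) with hMv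
      have hMvcard : Mv.card = Δ := by
        rw [hMv, Finset.univ_eq_attach, Finset.filter_attach (fun e : Sym2 V => v ∈ e),
          Finset.card_map, Finset.card_attach]
        rw [← SimpleGraph.incidenceFinset_eq_filter, G.card_incidenceFinset_eq_degree]
        exact hreg v
      have hsub : Nv ⊆ Mv.erase eh := by
        intro f hf
        obtain ⟨h1, h2⟩ := (hNvmem f).mp hf
        exact Finset.mem_erase.mpr ⟨h2, by rw [hMv]; simp [h1]⟩
      calc Nv.card ≤ (Mv.erase eh).card := Finset.card_le_card hsub
        _ ≤ Mv.card - 1 := (Finset.card_erase_of_mem (by rw [hMv]; simp [hveh])).le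
        _ = Δ - 1 := by rw [hMvcard]
    set Γ : Finset G.edgeFinset := (Γ₀ ∪ Nv).erase eh with hΓ
    have hNvΓ : Nv ⊆ Γ := by
      intro f hf
      exact Finset.mem_erase.mpr ⟨((hNvmem f).mp hf).2, Finset.mem_union_right _ hf⟩
    refine ⟨Γ, ?_, ?_, ?_⟩
    · rw [Finset.disjoint_left]
      intro f hfΓ hfS
      obtain ⟨hfne, hfU⟩ := Finset.mem_erase.mp hfΓ
      rcases Finset.mem_union.mp hfU with h1 | h2
      · exact (Finset.disjoint_left.mp hΓ₀T h1) (Finset.mem_erase.mpr ⟨hfne, hfS⟩)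
      · exact hNvS f h2 hfS
    · calc Γ.card ≤ (Γ₀ ∪ Nv).card := Finset.card_le_card (Finset.erase_subset _ _)
        _ ≤ Γ₀.card + Nv.card := Finset.card_union_le _ _
        _ ≤ n * (Δ - 1) + (Δ - 1) := Nat.add_le_add hΓ₀card hNvcard
        _ = (n + 1) * (Δ - 1) := by ring
    · intro z hz hΓ0
      -- first decode eh from the check equation at v
      have hzeh : z eh = 0 := by
        have heq := hz v
        have h₀ : ∀ b ∈ (Finset.univ : Finset G.edgeFinset), b ≠ eh →
            (if v ∈ (b : Sym2 V) then a v (b : Sym2 V) * z b else 0) = 0 := by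
          intro b _ hbne
          by_cases hb : v ∈ (b : Sym2 V)
          · rw [if_pos hb, hΓ0 b (hNvΓ ((hNvmem b).mpr ⟨hb, hbne⟩)), mul_zero]
          · rw [if_neg hb]
        have h₁ : eh ∉ (Finset.univ : Finset G.edgeFinset) →
            (if v ∈ (eh : Sym2 V) then a v (eh : Sym2 V) * z eh else 0) = 0 :=
          fun hh => absurd (Finset.mem_univ eh) hh
        rw [Finset.sum_eq_single eh h₀ h₁, if_pos hveh] at heq
        have hane : a v (eh : Sym2 V) ≠ 0 :=
          ha v _ ⟨(SimpleGraph.mem_edgeFinset).mp eh.2, hveh⟩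
        exact (mul_eq_zero.mp heq).resolve_left hane
      have hΓ₀0 : ∀ f ∈ Γ₀, z f = 0 := by
        intro f hf
        by_cases hfeh : f = eh
        · rw [hfeh]; exact hzeh
        · exact hΓ0 f (Finset.mem_erase.mpr ⟨hfeh, Finset.mem_union_left _ hf⟩)
      have hTz : ∀ e ∈ T, z e = 0 := hΓ₀dec z hz hΓ₀0
      intro e he
      by_cases heeh : e = eh
      · rw [heeh]; exact hzeh
      · exact hTz e (Finset.mem_erase.mpr ⟨heeh, he⟩)

/-- a graph code of a finite simple bipartite `Δ`-regular graph with finite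
girth `g ≥ 4` has `((g−1)(Δ−1), g−1)`-cooperative locality. -/
theorem stmt_7 {V : Type*} [Fintype V] [DecidableEq V]
    (G : SimpleGraph V) [DecidableRel G.Adj]
    (hbip : G.Colorable 2)
    (Δ : ℕ) (hreg : G.IsRegularOfDegree Δ)
    (g : ℕ) (hg : 4 ≤ g) (hgirth : G.girth = g)
    (F : Type*) [Field F] [Fintype F]
    (a : V → Sym2 V → F) (ha : ∀ v : V, ∀ e ∈ G.incidenceSet v, a v e ≠ 0)
    (Code : Set (G.edgeFinset → F))
    (hCode : Code = {x | ∀ v : V,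
      ∑ e : G.edgeFinset, (if v ∈ (e : Sym2 V) then a v (e : Sym2 V) * x e else 0) = 0})
    (S : Finset G.edgeFinset) (hS : S.card = g - 1) :
    ∃ Γ : Finset G.edgeFinset, Disjoint Γ S ∧ Γ.card ≤ (g - 1) * (Δ - 1) ∧
      ∀ x ∈ Code, ∀ y ∈ Code, (∀ e ∈ Γ, x e = y e) → ∀ e ∈ S, x e = y e := by
  classical
  obtain ⟨Γ, hdisj, hcard, hdec⟩ :=
    stmt7_aux G hg hgirth hreg a ha (g - 1) S hS (by omega)
  refine ⟨Γ, hdisj, hcard, ?_⟩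
  intro x hx y hy hagree e he
  rw [hCode, Set.mem_setOf_eq] at hx hy
  set z : G.edgeFinset → F := fun e => x e - y e with hzdef
  have hz : ∀ v : V, ∑ e : G.edgeFinset,
      (if v ∈ (e : Sym2 V) then a v (e : Sym2 V) * z e else 0) = 0 := by
    intro v
    have : ∀ e : G.edgeFinset,
        (if v ∈ (e : Sym2 V) then a v (e : Sym2 V) * z e else 0) =
          (if v ∈ (e : Sym2 V) then a v (e : Sym2 V) * x e else 0) -
          (if v ∈ (e : Sym2 V) then a v (e : Sym2 V) * y e else 0) := by
      intro e
      by_cases h : v ∈ (e : Sym2 V)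
      · rw [if_pos h, if_pos h, if_pos h, hzdef, mul_sub]
      · rw [if_neg h, if_neg h, if_neg h, sub_zero]
    rw [Finset.sum_congr rfl (fun e _ => this e), Finset.sum_sub_distrib, hx v, hy v, sub_zero]
  have hzΓ : ∀ e ∈ Γ, z e = 0 := by
    intro f hf
    rw [hzdef]
    exact sub_eq_zero.mpr (hagree f hf)
  have := hdec z hz hzΓ e he
  rw [hzdef] at this
  exact sub_eq_zero.mp this
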